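/- Let ⪯ be a total preorder on an additive abelian group M compatible with addition and negation as above, let ν_1 ⪰ ν_2 ⪰ ... ⪰ ν_n be elements of M, and fix γ ∈ M. Let m̄ be the span in Matrix n n k of the elementary matrices e_{ij} with γ ≺ ν_i - ν_j (strict inequality, meaning γ ⪯ ν_i - ν_j and not ν_i - ν_j ⪯ γ). Then m̄ is closed under left and right multiplication by upper triangular matrices: if b is upper triangular and X ∈ m̄, then bX ∈ m̄ and Xb ∈ m̄. -/

import Mathlib

/-- Let `⪯` be a total preorder on an abelian group `M` compatible with addition and
negation, `ν₁ ⪰ ... ⪰ νₙ` elements of `M`, and `γ ∈ M`. The span of the matrix units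
`e i j` with `γ ≺ νᵢ - νⱼ` (strictly) is closed under left and right multiplication
by upper triangular matrices. -/
theorem span_stdBasisMatrix_mul_upper_triangular
    (k : Type*) [Field k] (M : Type*) [AddCommGroup M] (n : ℕ)
    (r : M → M → Prop)
    (hrefl : ∀ β : M, r β β)
    (htrans : ∀ β γ δ : M, r β γ → r γ δ → r β δ)
    (htotal : ∀ β γ : M, r β γ ∨ r γ β)
    (haddc : ∀ β γ β' γ' : M, r β γ → r β' γ' → r (β + β') (γ + γ'))
    (hneg : ∀ β γ : M, r β γ → r (-γ) (-β))
    (ν : Fin n → M)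
    (hdec : ∀ i j : Fin n, j ≤ i → r (ν i) (ν j))
    (γ : M)
    (m : Submodule k (Matrix (Fin n) (Fin n) k))
    (hm : m = Submodule.span k
      {A : Matrix (Fin n) (Fin n) k | ∃ i j : Fin n,
        (r γ (ν i - ν j) ∧ ¬ r (ν i - ν j) γ) ∧ A = Matrix.single i j (1 : k)}) :
    ∀ b : Matrix (Fin n) (Fin n) k, (∀ i j : Fin n, j < i → b i j = 0) →
      ∀ X ∈ m, b * X ∈ m ∧ X * b ∈ m := by

  classical
  intro b hb X hX
  subst hm
  -- membership characterization
  have hmem : ∀ Y : Matrix (Fin n) (Fin n) k,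
      Y ∈ Submodule.span k {A : Matrix (Fin n) (Fin n) k | ∃ i j : Fin n,
        (r γ (ν i - ν j) ∧ ¬ r (ν i - ν j) γ) ∧ A = Matrix.single i j (1 : k)} ↔
      ∀ i j : Fin n, ¬ (r γ (ν i - ν j) ∧ ¬ r (ν i - ν j) γ) → Y i j = 0 := by
    intro Y
    constructor
    · intro hY
      induction hY using Submodule.span_induction with
      | mem A hA =>
        obtain ⟨i, j, hij, rfl⟩ := hA
        intro i' j' hP'
        by_cases h1 : i = i' ∧ j = j'
        · exact absurd (h1.1 ▸ h1.2 ▸ hij) hP'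
        · simp only [Matrix.single, Matrix.of_apply, if_neg h1]
      | zero => intro i j _; rfl
      | add x y _ _ hx hy =>
        intro i j h
        simp [Matrix.add_apply, hx i j h, hy i j h]
      | smul c x _ hx =>
        intro i j h
        simp [Matrix.smul_apply, hx i j h]
    · intro hY
      rw [Matrix.matrix_eq_sum_single Y]
      apply Submodule.sum_mem
      intro i _
      apply Submodule.sum_mem
      intro j _
      by_cases hP : r γ (ν i - ν j) ∧ ¬ r (ν i - ν j) γ
      · have : Matrix.single i j (Y i j) = Y i j • Matrix.single i j (1 : k) := by
          rw [Matrix.smul_single, smul_eq_mul, mul_one]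
        rw [this]
        exact Submodule.smul_mem _ _ (Submodule.subset_span ⟨i, j, hP, rfl⟩)
      · rw [hY i j hP]
        simp
  rw [hmem] at hX
  constructor
  · rw [hmem]
    intro i j hP
    rw [Matrix.mul_apply]
    apply Finset.sum_eq_zero
    intro l _
    by_cases hil : i ≤ l
    · by_cases hPl : r γ (ν l - ν j) ∧ ¬ r (ν l - ν j) γ
      · exfalso
        apply hP
        have hle : r (ν l - ν j) (ν i - ν j) := by
          have := haddc (ν l) (ν i) (-(ν j)) (-(ν j)) (hdec l i hil) (hrefl _)
          simpa [sub_eq_add_neg] using this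
        exact ⟨htrans _ _ _ hPl.1 hle, fun hc => hPl.2 (htrans _ _ _ hle hc)⟩
      · rw [hX l j hPl, mul_zero]
    · rw [hb i l (lt_of_not_ge hil), zero_mul]
  · rw [hmem]
    intro i j hP
    rw [Matrix.mul_apply]
    apply Finset.sum_eq_zero
    intro l _
    by_cases hlj : l ≤ j
    · by_cases hPl : r γ (ν i - ν l) ∧ ¬ r (ν i - ν l) γ
      · exfalso
        apply hP
        have hle : r (ν i - ν l) (ν i - ν j) := by
          have := haddc (ν i) (ν i) (-(ν l)) (-(ν j)) (hrefl _) (hneg _ _ (hdec j l hlj))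
          simpa [sub_eq_add_neg] using this
        exact ⟨htrans _ _ _ hPl.1 hle, fun hc => hPl.2 (htrans _ _ _ hle hc)⟩
      · rw [hX i l hPl, zero_mul]
    · rw [hb l j (lt_of_not_ge hlj), mul_zero]
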